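/- Write n in base 4 as n = Σ_{k≥0} d_k 4^k with digits d_k ∈ {0,1,2,3}, and write d_k = 2 j_k + i_k with i_k, j_k ∈ {0,1}. Then M₂(n) equals the XOR over k ≡ 0 (mod 3) of (i_k ⊕ j_k), XORed with the XOR over k ≡ 1 (mod 3) of j_k, XORed with the XOR over k ≡ 2 (mod 3) of i_k. -/

import Mathlib

/-- The defining recurrences of the sequence `M₂` (values in `{0,1}`). -/
def IsM2 (M : ℕ → ℕ) : Prop :=
  (∀ n, M n ≤ 1) ∧ M 0 = 0 ∧ M 1 = 1 ∧
    (∀ n, 1 ≤ n → M (4 * n) = M (2 * n + M n)) ∧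
    (∀ n, 1 ≤ n → M (4 * n + 1) = 1 - M (4 * n)) ∧
    (∀ n, M (4 * n + 2) = M (2 * n + 1 - M n)) ∧
    (∀ n, M (4 * n + 3) = 1 - M (4 * n + 2))

/-- The `k`-th base-4 digit of `n`. -/
def dig4 (n k : ℕ) : ℕ := n / 4 ^ k % 4

def vv (c b : ℕ) : ℕ := if c % 3 = 2 then 0 else b % 2

def ww (c d : ℕ) : ℕ :=
  if c % 3 = 0 then d % 2 + d / 2 else if c % 3 = 1 then d / 2 else d % 2

def H : ℕ → ℕ → ℕ
  | _, 0 => 0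
  | c, n+1 => (vv c (n+1) + H (c+1) ((n+1)/2)) % 2
termination_by c n => n
decreasing_by omega

lemma H_zero (c : ℕ) : H c 0 = 0 := by simp [H]

lemma H_rec (c n : ℕ) : H c n = (vv c n + H (c+1) (n / 2)) % 2 := by
  cases n with
  | zero => simp [H, vv]
  | succ n => simp [H]

lemma H_le (c n : ℕ) : H c n ≤ 1 := by
  rw [H_rec]; omega

lemma H_even (c m : ℕ) : H c (2*m) = H (c+1) m := by
  rw [H_rec]
  have h1 : vv c (2*m) = 0 := by simp [vv, Nat.mul_mod_right]
  have h2 : 2*m/2 = m := by omega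
  have h3 := H_le (c+1) m
  rw [h1, h2]; omega

lemma H_odd (c m : ℕ) : H c (2*m+1) = (vv c 1 + H (c+1) m) % 2 := by
  rw [H_rec]
  have h1 : (2*m+1) % 2 = 1 := by omega
  have h2 : (2*m+1)/2 = m := by omega
  rw [h2]
  simp only [vv, h1]

lemma H0_even (m : ℕ) : H 0 (2*m) = H 1 m := H_even 0 m
lemma H1_even (m : ℕ) : H 1 (2*m) = H 2 m := H_even 1 m

lemma H0_odd (m : ℕ) : H 0 (2*m+1) = (1 + H 1 m) % 2 := by
  simpa [vv] using H_odd 0 m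

lemma H1_odd (m : ℕ) : H 1 (2*m+1) = (1 + H 2 m) % 2 := by
  simpa [vv] using H_odd 1 m

lemma H_period (n : ℕ) : ∀ c, H (c+3) n = H c n := by
  induction n using Nat.strong_induction_on with
  | _ n ih =>
    intro c
    rcases Nat.eq_zero_or_pos n with rfl | hn
    · simp [H_zero]
    · rw [H_rec (c+3) n, H_rec c n]
      have hv : vv (c+3) n = vv c n := by simp [vv, Nat.add_mod_right]
      have hh : c + 3 + 1 = (c+1) + 3 := by omega
      rw [hv, hh, ih (n/2) (by omega) (c+1)]

lemma H012 (n : ℕ) : H 2 n = (H 0 n + H 1 n) % 2 := by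
  induction n using Nat.strong_induction_on with
  | _ n ih =>
    rcases Nat.eq_zero_or_pos n with rfl | hn
    · simp [H_zero]
    · rw [H_rec 2 n, H_rec 0 n, H_rec 1 n]
      simp only [Nat.reduceAdd, Nat.zero_add]
      have h3 : H 3 (n/2) = H 0 (n/2) := by simpa using H_period (n/2) 0
      rw [h3, ih (n/2) (by omega)]
      have hv2 : vv 2 n = 0 := by simp [vv]
      have hv0 : vv 0 n = n % 2 := by simp [vv]
      have hv1 : vv 1 n = n % 2 := by simp [vv]
      rw [hv0, hv1, hv2]
      have a1 := H_le 0 (n/2)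
      have a2 := H_le 1 (n/2)
      omega

lemma H04 (n : ℕ) : H 0 (4*n) = H 2 n := by
  have h : 4*n = 2*(2*n) := by ring
  rw [h, H0_even, H1_even]

lemma key3 (n : ℕ) : H 0 (2*n + H 0 n) = H 0 (4*n) := by
  rw [H04, H012]
  have hb := H_le 0 n
  have hb1 := H_le 1 n
  rcases Nat.le_one_iff_eq_zero_or_eq_one.1 hb with h | h <;> rw [h]
  · rw [Nat.add_zero, H0_even]; omega
  · rw [H0_odd]

lemma key4 (n : ℕ) : H 0 (4*n+1) = 1 - H 0 (4*n) := by
  have h : 4*n+1 = 2*(2*n)+1 := by ring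
  rw [h, H0_odd, H1_even, H04]
  have h2 := H_le 2 n
  omega

lemma H042 (n : ℕ) : H 0 (4*n+2) = (1 + H 2 n) % 2 := by
  have h : 4*n+2 = 2*(2*n+1) := by ring
  rw [h, H0_even, H1_odd]

lemma key5 (n : ℕ) : H 0 (2*n + 1 - H 0 n) = H 0 (4*n+2) := by
  rw [H042, H012]
  have hb := H_le 0 n
  have hb1 := H_le 1 n
  rcases Nat.le_one_iff_eq_zero_or_eq_one.1 hb with h | h <;> rw [h]
  · rw [Nat.sub_zero, H0_odd]; omega
  · have hs : 2*n + 1 - 1 = 2*n := by omega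
    rw [hs, H0_even]; omega

lemma key6 (n : ℕ) : H 0 (4*n+3) = 1 - H 0 (4*n+2) := by
  have h : 4*n+3 = 2*(2*n+1)+1 := by ring
  rw [h, H0_odd, H1_odd, H042]
  have h2 := H_le 2 n
  omega

lemma sum_eq (m : ℕ) : ∀ c n, n < 4 ^ m →
    (∑ k ∈ Finset.range m, ww (c+k) (dig4 n k)) % 2 = H (2*c) n := by
  induction m with
  | zero =>
    intro c n h
    simp only [pow_zero, Nat.lt_one_iff] at h
    subst h
    simp [H_zero]
  | succ m ihm =>
    intro c n h
    rw [Finset.sum_range_succ']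
    have hdig : ∀ k, dig4 n (k+1) = dig4 (n/4) k := by
      intro k
      unfold dig4
      rw [Nat.div_div_eq_div_mul]
      congr 2
      rw [pow_succ]; ring
    have hsum : (∑ k ∈ Finset.range m, ww (c+(k+1)) (dig4 n (k+1)))
        = ∑ k ∈ Finset.range m, ww ((c+1)+k) (dig4 (n/4) k) :=
      Finset.sum_congr rfl (fun k _ => by rw [hdig, show c+(k+1) = (c+1)+k from by omega])
    rw [hsum]
    have h4 : n / 4 < 4 ^ m := by
      rw [Nat.div_lt_iff_lt_mul (by norm_num : (0:ℕ) < 4)]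
      calc n < 4 ^ (m+1) := h
        _ = 4 ^ m * 4 := by rw [pow_succ]
    have hIH := ihm (c+1) (n/4) h4
    rw [show 2*(c+1) = 2*c+1+1 from by ring] at hIH
    have hd0 : dig4 n 0 = n % 4 := by simp [dig4]
    rw [Nat.add_mod, hIH, hd0]
    rw [H_rec (2*c) n, H_rec (2*c+1) (n/2)]
    rw [Nat.div_div_eq_div_mul, show (2:ℕ)*2 = 4 from rfl]
    have hX := H_le (2*c+1+1) (n/4)
    set X := H (2*c+1+1) (n/4) with hXdef
    simp only [ww, vv, Nat.add_zero]
    split_ifs <;> omega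

lemma M_eq (M : ℕ → ℕ) (hM : IsM2 M) : ∀ n, M n = H 0 n := by
  obtain ⟨hle, h0, h1, r4, r41, r42, r43⟩ := hM
  intro n
  induction n using Nat.strong_induction_on with
  | _ n ih =>
    have hH1 : H 0 1 = 1 := by
      rw [H_rec]
      simp [vv, H_zero]
    obtain ⟨q, r, hr, rfl⟩ : ∃ q r, r < 4 ∧ n = 4*q+r :=
      ⟨n/4, n%4, Nat.mod_lt _ (by norm_num), (Nat.div_add_mod n 4).symm⟩
    interval_cases r
    · rcases Nat.eq_zero_or_pos q with rfl | hq
      · simpa [H_zero] using h0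
      · rw [Nat.add_zero] at *
        rw [r4 q hq, ih q (by omega)]
        have hb := H_le 0 q
        rw [ih (2*q + H 0 q) (by omega)]
        exact key3 q
    · rcases Nat.eq_zero_or_pos q with rfl | hq
      · norm_num
        rw [hH1]
        exact h1
      · rw [r41 q hq, ih (4*q) (by omega)]
        exact (key4 q).symm
    · rw [r42 q, ih q (by omega)]
      have hb := H_le 0 q
      rw [ih (2*q + 1 - H 0 q) (by omega)]
      exact key5 q
    · rw [r43 q, ih (4*q+2) (by omega)]
      exact (key6 q).symm

/-- writing `n = Σ d_k 4^k` with `d_k = 2 j_k + i_k`, `i_k, j_k ∈ {0,1}`,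
we have `M₂(n) = ⨁_{k ≡ 0 (3)} (i_k ⊕ j_k) ⊕ ⨁_{k ≡ 1 (3)} j_k ⊕ ⨁_{k ≡ 2 (3)} i_k`.
(The sum over `k < n + 1` includes all nonzero digits, and taking the sum mod 2 computes
the iterated XOR.) -/
theorem M2_digit_formula (M : ℕ → ℕ) (hM : IsM2 M) :
    ∀ n, M n =
      (∑ k ∈ Finset.range (n + 1),
        (if k % 3 = 0 then dig4 n k % 2 + dig4 n k / 2
         else if k % 3 = 1 then dig4 n k / 2
         else dig4 n k % 2)) % 2 := by
  intro n
  rw [M_eq M hM n]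
  have hlt : n < 4 ^ (n+1) := by
    calc n < 4 ^ n := Nat.lt_pow_self (by norm_num)
      _ ≤ 4 ^ (n+1) := Nat.pow_le_pow_right (by norm_num) (by omega)
  have hs := sum_eq (n+1) 0 n hlt
  simp only [Nat.zero_add, Nat.mul_zero] at hs
  rw [← hs]
  rfl
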